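/- (Corollary 2.9) Let R be a 2-torsion free unital prime ring containing a nontrivial idempotent P (P² = P, P ≠ 0, P ≠ 1). If φ : R → R is an additive map satisfying condition (P), then there exist a derivation δ : R → R and a multiplier η : R → R such that φ = δ + η. If in addition φ(1) = 0, then φ is a derivation. -/
import Mathlib

namespace PrimeRingCor

structure Ctx (R : Type*) [Ring R] where
  f : R →+ R
  p : R
  q : R
  hsum : p + q = 1
  hpq : p * q = 0
  h2 : ∀ a : R, a + a = 0 → a = 0
  hB : ∀ U V : R, U * V = 0 → V * U = 0 →
    f U * V + V * f U + U * f V + f V * U = 0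

variable {R : Type*} [Ring R] (c : Ctx R)

namespace Ctx

lemma hp2 : c.p * c.p = c.p := by
  have h := congrArg (c.p * ·) c.hsum
  simpa [mul_add, c.hpq] using h

lemma hqp : c.q * c.p = 0 := by
  have h := congrArg (· * c.p) c.hsum
  simp only [add_mul, one_mul, c.hp2] at h
  exact add_left_cancel (h.trans (add_zero c.p).symm)

lemma hq2 : c.q * c.q = c.q := by
  have h := congrArg (c.q * ·) c.hsum
  simpa [mul_add, c.hqp] using h

/-- the mirrored context, swapping `p` and `q`. -/
def mirror : Ctx R where
  f := c.f
  p := c.q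
  q := c.p
  hsum := by rw [add_comm]; exact c.hsum
  hpq := c.hqp
  h2 := c.h2
  hB := c.hB

@[simp] lemma mirror_f : c.mirror.f = c.f := rfl
@[simp] lemma mirror_p : c.mirror.p = c.q := rfl
@[simp] lemma mirror_q : c.mirror.q = c.p := rfl

/-- left absorption gives right annihilation by the complement -/
lemma l0 {m : R} (h : c.p * m = m) : c.q * m = 0 := by
  rw [← h, ← mul_assoc, c.hqp, zero_mul]

lemma r0 {m : R} (h : m * c.q = m) : m * c.p = 0 := by
  rw [← h, mul_assoc, c.hqp, mul_zero]

lemma l0' {m : R} (h : c.q * m = m) : c.p * m = 0 := by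
  rw [← h, ← mul_assoc, c.hpq, zero_mul]

lemma r0' {m : R} (h : m * c.p = m) : m * c.q = 0 := by
  rw [← h, mul_assoc, c.hpq, mul_zero]

/-- the bilinear form from condition (P) -/
def B (U V : R) : R := c.f U * V + V * c.f U + U * c.f V + c.f V * U

lemma hB' (U V : R) (h1 : U * V = 0) (h2 : V * U = 0) : c.B U V = 0 :=
  c.hB U V h1 h2

@[simp] lemma mirror_B (U V : R) : c.mirror.B U V = c.B U V := rfl

lemma B_symm (U V : R) : c.B U V = c.B V U := by unfold B; abel

lemma B_add_left (U U' V : R) : c.B (U + U') V = c.B U V + c.B U' V := by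
  unfold B; rw [map_add]; noncomm_ring

lemma B_add_right (U V V' : R) : c.B U (V + V') = c.B U V + c.B U V' := by
  unfold B; rw [map_add]; noncomm_ring

lemma B_sub_left (U U' V : R) : c.B (U - U') V = c.B U V - c.B U' V := by
  unfold B; rw [map_sub]; noncomm_ring

lemma B_sub_right (U V V' : R) : c.B U (V - V') = c.B U V - c.B U V' := by
  unfold B; rw [map_sub]; noncomm_ring

/-! ### zero-product pairs -/

lemma pair_pq : c.B c.p c.q = 0 := c.hB' _ _ c.hpq c.hqp

/-- `B p w = 0` for `w` in the `q`-corner -/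
lemma pair_pw (w : R) (hw1 : c.q * w = w) (hw2 : w * c.q = w) : c.B c.p w = 0 := by
  refine c.hB' _ _ ?_ ?_
  · rw [← hw1, ← mul_assoc, c.hpq, zero_mul]
  · rw [← hw2, mul_assoc, c.hqp, mul_zero]

/-- `B m m' = 0` for `m, m'` both in the `pRq` corner -/
lemma pair_mm (m m' : R) (hm1 : c.p * m = m) (hm2 : m * c.q = m)
    (hm1' : c.p * m' = m') (hm2' : m' * c.q = m') :
    c.B m m' = 0 := by
  have h1 : m * m' = 0 := by
    rw [← hm2, ← hm1', mul_assoc, ← mul_assoc c.q, c.hqp, zero_mul, mul_zero]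
  have h2 : m' * m = 0 := by
    rw [← hm2', ← hm1, mul_assoc, ← mul_assoc c.q, c.hqp, zero_mul, mul_zero]
  exact c.hB' _ _ h1 h2

/-- `a` ends in `q`, `b` starts with `p` : product vanishes -/
lemma mul_q_p (a b : R) (ha : a * c.q = a) (hb : c.p * b = b) : a * b = 0 := by
  rw [← ha, ← hb, mul_assoc, ← mul_assoc c.q, c.hqp, zero_mul, mul_zero]

lemma conj1 (m : R) (hm1 : c.p * m = m) (hm2 : m * c.q = m) :
    c.B m c.q = c.B c.p m := by
  have hmm : m * m = 0 := c.mul_q_p m m hm2 hm1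
  have hqm : c.q * m = 0 := c.l0 hm1
  have hmp : m * c.p = 0 := c.r0 hm2
  have z1 : (c.p - m) * (c.q + m) = 0 := by
    linear_combination (norm := noncomm_ring) c.hpq + hm1 - hm2 - hmm
  have z2 : (c.q + m) * (c.p - m) = 0 := by
    linear_combination (norm := noncomm_ring) c.hqp - hqm + hmp - hmm
  have h0 := c.hB' _ _ z1 z2
  have hexp : c.B (c.p - m) (c.q + m) =
      c.B c.p c.q + c.B c.p m - c.B m c.q - c.B m m := by
    rw [c.B_sub_left, c.B_add_right, c.B_add_right]; abel
  rw [hexp, c.pair_pq, c.pair_mm m m hm1 hm2 hm1 hm2] at h0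
  have h0' : c.B c.p m - c.B m c.q = 0 := by rw [← h0]; abel
  have := sub_eq_zero.mp h0'
  rw [this]

lemma conj2 (m w : R) (hm1 : c.p * m = m) (hm2 : m * c.q = m)
    (hw1 : c.q * w = w) (hw2 : w * c.q = w) :
    c.B m w = c.B c.p (m * w) := by
  have hpw : c.p * w = 0 := c.l0' hw1
  have hwp : w * c.p = 0 := c.r0 hw2
  have hwm : w * m = 0 := c.mul_q_p w m hw2 hm1
  have hmm : m * m = 0 := c.mul_q_p m m hm2 hm1
  have z1 : (c.p + m) * (w - m * w) = 0 := by
    linear_combination (norm := noncomm_ring) hpw - hm1 * w - hmm * w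
  have z2 : (w - m * w) * (c.p + m) = 0 := by
    linear_combination (norm := noncomm_ring) hwp + hwm - m * hwp - m * hwm
  have h0 := c.hB' _ _ z1 z2
  have hexp : c.B (c.p + m) (w - m * w) =
      c.B c.p w - c.B c.p (m * w) + c.B m w - c.B m (m * w) := by
    rw [c.B_add_left, c.B_sub_right, c.B_sub_right]; abel
  have e1 : c.p * (m * w) = m * w := by rw [← mul_assoc, hm1]
  have e2 : (m * w) * c.q = m * w := by rw [mul_assoc, hw2]
  rw [hexp, c.pair_pw w hw1 hw2, c.pair_mm m (m*w) hm1 hm2 e1 e2] at h0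
  have h0' : c.B m w - c.B c.p (m * w) = 0 := by rw [← h0]; abel
  have := sub_eq_zero.mp h0'
  rw [this]

lemma conj3 (m v : R) (hm1 : c.p * m = m) (hm2 : m * c.q = m)
    (hv1 : c.p * v = v) (hv2 : v * c.p = v) :
    c.B m v = c.B c.q (v * m) := by
  have hqv : c.q * v = 0 := c.l0 hv1
  have hvq : v * c.q = 0 := c.r0' hv2
  have hmv : m * v = 0 := c.mul_q_p m v hm2 hv1
  have hmm : m * m = 0 := c.mul_q_p m m hm2 hm1
  have z1 : (c.q + m) * (v - v * m) = 0 := by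
    linear_combination (norm := noncomm_ring) hqv - hqv * m + hmv - hmv * m
  have hmm' : m * (m * v) = 0 := by rw [← mul_assoc, hmm, zero_mul]
  have z2 : (v - v * m) * (c.q + m) = 0 := by
    linear_combination (norm := noncomm_ring) hvq - v * hm2 - v * hmm
  have h0 := c.hB' _ _ z1 z2
  have hexp : c.B (c.q + m) (v - v * m) =
      c.B c.q v - c.B c.q (v * m) + c.B m v - c.B m (v * m) := by
    rw [c.B_add_left, c.B_sub_right, c.B_sub_right]; abel
  have hqv0 : c.B c.q v = 0 := c.mirror.pair_pw v hv1 hv2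
  have e1 : c.p * (v * m) = v * m := by rw [← mul_assoc, hv1]
  have e2 : (v * m) * c.q = v * m := by rw [mul_assoc, hm2]
  rw [hexp, hqv0, c.pair_mm m (v*m) hm1 hm2 e1 e2] at h0
  have h0' : c.B m v - c.B c.q (v * m) = 0 := by rw [← h0]; abel
  have := sub_eq_zero.mp h0'
  rw [this]

/-! ### component extraction -/

lemma dec (x : R) : c.f x =
    c.p * c.f x * c.p + c.p * c.f x * c.q + c.q * c.f x * c.p + c.q * c.f x * c.q := by
  have h1 : (c.p + c.q) * (c.f x * (c.p + c.q)) = c.f x := by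
    rw [c.hsum, mul_one, one_mul]
  linear_combination (norm := noncomm_ring) -h1

lemma a1 : c.q * c.f c.p * c.q = 0 := by
  have h := c.pair_pq
  unfold B at h
  refine c.h2 _ ?_
  linear_combination (norm := noncomm_ring) c.q * h * c.q
    - (c.q * c.f c.p) * c.hq2 - c.hq2 * (c.f c.p * c.q)
    - c.hqp * (c.f c.q * c.q) - (c.q * c.f c.q) * c.hpq

lemma a3 : c.p * c.f c.q * c.q + c.p * c.f c.p * c.q = 0 := by
  have h := c.pair_pq
  unfold B at h
  linear_combination (norm := noncomm_ring) c.p * h * c.q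
    - (c.p * c.f c.p) * c.hq2 - c.hpq * (c.f c.p * c.q)
    - c.hp2 * (c.f c.q * c.q) - (c.p * c.f c.q) * c.hpq

lemma a2 : c.p * c.f c.q * c.p = 0 := c.mirror.a1

lemma a4 : c.q * c.f c.p * c.p + c.q * c.f c.q * c.p = 0 := by
  have h := c.mirror.a3
  simp only [mirror_f, mirror_p, mirror_q] at h
  linear_combination (norm := noncomm_ring) h

lemma hc : c.f 1 = c.f c.p + c.f c.q := by rw [← c.hsum, map_add]

/-! ### `w`-family : components of `f w` for `w` in the `q` corner -/

section wfam
variable (w : R) (hw1 : c.q * w = w) (hw2 : w * c.q = w)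
include hw1 hw2

lemma b1 : c.p * c.f w * c.p = 0 := by
  have h := c.pair_pw w hw1 hw2
  unfold B at h
  have hpw : c.p * w = 0 := c.l0' hw1
  have hwp : w * c.p = 0 := c.r0 hw2
  refine c.h2 _ ?_
  linear_combination (norm := noncomm_ring) c.p * h * c.p
    - (c.p * c.f c.p) * hwp - hpw * (c.f c.p * c.p)
    - c.hp2 * (c.f w * c.p) - (c.p * c.f w) * c.hp2

lemma b2 : c.p * c.f w * c.q + c.p * (c.f c.p * w) = 0 := by
  have h := c.pair_pw w hw1 hw2
  unfold B at h
  have hpw : c.p * w = 0 := c.l0' hw1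
  linear_combination (norm := noncomm_ring) c.p * h * c.q
    - (c.p * c.f c.p) * hw2 - hpw * (c.f c.p * c.q)
    - c.hp2 * (c.f w * c.q) - (c.p * c.f w) * c.hpq

lemma b3 : c.q * c.f w * c.p + w * (c.f c.p * c.p) = 0 := by
  have h := c.pair_pw w hw1 hw2
  unfold B at h
  have hwp : w * c.p = 0 := c.r0 hw2
  linear_combination (norm := noncomm_ring) c.q * h * c.p
    - (c.q * c.f c.p) * hwp - hw1 * (c.f c.p * c.p)
    - c.hqp * (c.f w * c.p) - (c.q * c.f w) * c.hp2

end wfam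

/-! ### `v`-family : components of `f v` for `v` in the `p` corner -/

section vfam
variable (v : R) (hv1 : c.p * v = v) (hv2 : v * c.p = v)
include hv1 hv2

lemma v1 : c.q * c.f v * c.q = 0 := c.mirror.b1 v hv1 hv2

lemma v2 : c.q * c.f v * c.p = c.q * c.f c.p * c.p * v := by
  have mb2 := c.mirror.b2 v hv1 hv2
  simp only [mirror_f, mirror_p, mirror_q] at mb2
  linear_combination (norm := noncomm_ring) mb2 + (c.q * c.f c.q) * hv1 - c.a4 * v

lemma v3 : c.p * c.f v * c.q = v * (c.f c.p * c.q) := by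
  have mb3 := c.mirror.b3 v hv1 hv2
  simp only [mirror_f, mirror_p, mirror_q] at mb3
  linear_combination (norm := noncomm_ring) mb3 - v * c.a3
    + hv2 * (c.f c.q * c.q) + hv2 * (c.f c.p * c.q)

end vfam

lemma hp2' (t : R) : c.p * (c.p * t) = c.p * t := by rw [← mul_assoc, c.hp2]
lemma hq2' (t : R) : c.q * (c.q * t) = c.q * t := by rw [← mul_assoc, c.hq2]
lemma hpq' (t : R) : c.p * (c.q * t) = 0 := by rw [← mul_assoc, c.hpq, zero_mul]
lemma hqp' (t : R) : c.q * (c.p * t) = 0 := by rw [← mul_assoc, c.hqp, zero_mul]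

/-- rewrite rules (extended forms) for `f p` and `f q` corner values -/
lemma ra1 : c.q * (c.f c.p * c.q) = 0 := by
  linear_combination (norm := noncomm_ring) c.a1
lemma ra1' (t : R) : c.q * (c.f c.p * (c.q * t)) = 0 := by
  linear_combination (norm := noncomm_ring) c.a1 * t
lemma ra2 : c.p * (c.f c.q * c.p) = 0 := by
  linear_combination (norm := noncomm_ring) c.a2
lemma ra2' (t : R) : c.p * (c.f c.q * (c.p * t)) = 0 := by
  linear_combination (norm := noncomm_ring) c.a2 * t
lemma ra3 : c.p * (c.f c.q * c.q) = -(c.p * (c.f c.p * c.q)) := by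
  linear_combination (norm := noncomm_ring) c.a3
lemma ra3' (t : R) : c.p * (c.f c.q * (c.q * t)) = -(c.p * (c.f c.p * (c.q * t))) := by
  linear_combination (norm := noncomm_ring) c.a3 * t
lemma ra4 : c.q * (c.f c.q * c.p) = -(c.q * (c.f c.p * c.p)) := by
  linear_combination (norm := noncomm_ring) c.a4
lemma ra4' (t : R) : c.q * (c.f c.q * (c.p * t)) = -(c.q * (c.f c.p * (c.p * t))) := by
  linear_combination (norm := noncomm_ring) c.a4 * t

lemma sw1 (x : R) : c.p * (c.p * (x * c.q)) = c.p * (x * c.q) := c.hp2' _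

lemma sw2 (x : R) : (c.p * (x * c.q)) * c.q = c.p * (x * c.q) := by
  simp only [mul_assoc, c.hq2]

/-! ### `m`-family : components of `f m`, `m = p*(x*q)` -/

lemma m1 (x : R) : c.p * (c.f (c.p * (x * c.q)) * c.p)
    = -(c.p * (x * (c.q * (c.f c.p * c.p)))) := by
  have h := c.conj1 _ (c.sw1 x) (c.sw2 x)
  unfold B at h
  have h' := congrArg (fun t => c.p * t * c.p) h
  simp only [mul_add, add_mul, mul_sub, sub_mul, mul_neg, neg_mul, mul_assoc,
    mul_zero, zero_mul, mul_one, one_mul, add_zero, zero_add,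
    c.hp2, c.hq2, c.hpq, c.hqp, c.hp2', c.hq2', c.hpq', c.hqp',
    c.ra1, c.ra1', c.ra2, c.ra2', c.ra3, c.ra3', c.ra4, c.ra4'] at h'
  rw [eq_neg_iff_add_eq_zero]
  refine c.h2 _ ?_
  linear_combination (norm := noncomm_ring) -h'

lemma m4 (x : R) : c.q * (c.f (c.p * (x * c.q)) * c.q)
    = c.q * (c.f c.p * (c.p * (x * c.q))) := by
  have h := c.conj1 _ (c.sw1 x) (c.sw2 x)
  unfold B at h
  have h' := congrArg (fun t => c.q * t * c.q) h
  simp only [mul_add, add_mul, mul_sub, sub_mul, mul_neg, neg_mul, mul_assoc,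
    mul_zero, zero_mul, mul_one, one_mul, add_zero, zero_add,
    c.hp2, c.hq2, c.hpq, c.hqp, c.hp2', c.hq2', c.hpq', c.hqp',
    c.ra1, c.ra1', c.ra2, c.ra2', c.ra3, c.ra3', c.ra4, c.ra4'] at h'
  rw [← sub_eq_zero]
  refine c.h2 _ ?_
  linear_combination (norm := noncomm_ring) h'

lemma mM2 (x : R) : c.p * (c.f c.p * (c.p * (x * c.q)))
    = c.p * (x * (c.q * (c.f c.q * c.q))) := by
  have h := c.conj1 _ (c.sw1 x) (c.sw2 x)
  unfold B at h
  have h' := congrArg (fun t => c.p * t * c.q) h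
  simp only [mul_add, add_mul, mul_sub, sub_mul, mul_neg, neg_mul, mul_assoc,
    mul_zero, zero_mul, mul_one, one_mul, add_zero, zero_add,
    c.hp2, c.hq2, c.hpq, c.hqp, c.hp2', c.hq2', c.hpq', c.hqp',
    c.ra1, c.ra1', c.ra2, c.ra2', c.ra3, c.ra3', c.ra4, c.ra4'] at h'
  linear_combination (norm := noncomm_ring) -h'

/-! ### extended component rules for m-family, and w/v families in sandwich form -/

lemma m1' (x t : R) : c.p * (c.f (c.p * (x * c.q)) * (c.p * t))
    = -(c.p * (x * (c.q * (c.f c.p * (c.p * t))))) := by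
  linear_combination (norm := noncomm_ring) c.m1 x * t

lemma m4' (x t : R) : c.q * (c.f (c.p * (x * c.q)) * (c.q * t))
    = c.q * (c.f c.p * (c.p * (x * (c.q * t)))) := by
  linear_combination (norm := noncomm_ring) c.m4 x * t

lemma sq (u : R) (h : u * u = 0) : c.f u * u + u * c.f u = 0 := by
  have h0 := c.hB' u u h h
  unfold B at h0
  refine c.h2 _ ?_
  linear_combination (norm := noncomm_ring) h0

lemma st1 (x : R) : c.q * (c.f (c.p * (x * c.q)) * (c.p * (x * c.q))) = 0 := by
  have hmm : (c.p * (x * c.q)) * (c.p * (x * c.q)) = 0 :=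
    c.mul_q_p _ _ (c.sw2 x) (c.sw1 x)
  have h := c.sq _ hmm
  have h' := congrArg (fun t => c.q * t * c.q) h
  simp only [mul_add, add_mul, mul_sub, sub_mul, mul_neg, neg_mul, mul_assoc,
    mul_zero, zero_mul, mul_one, one_mul, add_zero, zero_add,
    c.hp2, c.hq2, c.hpq, c.hqp, c.hp2', c.hq2', c.hpq', c.hqp'] at h'
  linear_combination (norm := noncomm_ring) h'

lemma k2 (x y : R) : c.q * (c.f (c.p * (y * (c.p * (x * c.q)))) * c.p)
    = c.q * (c.f (c.p * (x * c.q)) * (c.p * (y * c.p))) := by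
  have hv1 : c.p * (c.p * (y * c.p)) = c.p * (y * c.p) := c.hp2' _
  have hv2 : (c.p * (y * c.p)) * c.p = c.p * (y * c.p) := by
    simp only [mul_assoc, c.hp2]
  have h := c.conj3 _ _ (c.sw1 x) (c.sw2 x) hv1 hv2
  unfold B at h
  have h' := congrArg (fun t => c.q * t * c.p) h
  simp only [mul_add, add_mul, mul_sub, sub_mul, mul_neg, neg_mul, mul_assoc,
    mul_zero, zero_mul, mul_one, one_mul, add_zero, zero_add,
    c.hp2, c.hq2, c.hpq, c.hqp, c.hp2', c.hq2', c.hpq', c.hqp',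
    c.ra1, c.ra1', c.ra2, c.ra2', c.ra3, c.ra3', c.ra4, c.ra4'] at h'
  linear_combination (norm := noncomm_ring) -h'

lemma k2' (x y t : R) : c.q * (c.f (c.p * (y * (c.p * (x * c.q)))) * (c.p * t))
    = c.q * (c.f (c.p * (x * c.q)) * (c.p * (y * (c.p * t)))) := by
  linear_combination (norm := noncomm_ring) c.k2 x y * t

lemma m3 (hprime : ∀ a b : R, (∀ r : R, a * r * b = 0) → a = 0 ∨ b = 0)
    (x : R) : c.q * (c.f (c.p * (x * c.q)) * c.p) = 0 := by
  -- polarization of st1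
  have pol : ∀ y : R, c.q * (c.f (c.p * (x * c.q)) * (c.p * (y * c.q)))
      + c.q * (c.f (c.p * (y * c.q)) * (c.p * (x * c.q))) = 0 := by
    intro y
    have hxy := c.st1 (x + y)
    simp only [add_mul, mul_add, map_add] at hxy
    linear_combination (norm := noncomm_ring) hxy - c.st1 x - c.st1 y
  -- substitute y := y * (p * (x * q)) and use k2
  have st2 : ∀ y : R, c.q * (c.f (c.p * (x * c.q)) * (c.p * (y * (c.p * (x * c.q))))) = 0 := by
    intro y
    have h1 := pol (y * (c.p * (x * c.q)))
    simp only [mul_add, add_mul, mul_assoc, c.hp2, c.hq2, c.hpq, c.hqp,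
      c.hp2', c.hq2', c.hpq', c.hqp', mul_zero, zero_mul] at h1
    rw [c.k2' x y (x * c.q)] at h1
    refine c.h2 _ ?_
    linear_combination (norm := noncomm_ring) h1
  have hr : ∀ r : R, (c.q * (c.f (c.p * (x * c.q)) * c.p)) * r * (c.p * (x * c.q)) = 0 := by
    intro r
    linear_combination (norm := noncomm_ring) st2 r
  rcases hprime _ _ hr with h | h
  · exact h
  · rw [h, map_zero, zero_mul, mul_zero]

lemma m3' (hprime : ∀ a b : R, (∀ r : R, a * r * b = 0) → a = 0 ∨ b = 0)
    (x t : R) : c.q * (c.f (c.p * (x * c.q)) * (c.p * t)) = 0 := by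
  linear_combination (norm := noncomm_ring) c.m3 hprime x * t

/-! ### n-family (mirror of m-family) -/

lemma n1 (x : R) : c.q * (c.f (c.q * (x * c.p)) * c.q)
    = -(c.q * (x * (c.p * (c.f c.q * c.q)))) := by
  have h := c.mirror.m1 x
  simp only [mirror_f, mirror_p, mirror_q] at h
  exact h

lemma n1' (x t : R) : c.q * (c.f (c.q * (x * c.p)) * (c.q * t))
    = -(c.q * (x * (c.p * (c.f c.q * (c.q * t))))) := by
  linear_combination (norm := noncomm_ring) c.n1 x * t

lemma n4 (x : R) : c.p * (c.f (c.q * (x * c.p)) * c.p)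
    = c.p * (c.f c.q * (c.q * (x * c.p))) := by
  have h := c.mirror.m4 x
  simp only [mirror_f, mirror_p, mirror_q] at h
  exact h

lemma n4' (x t : R) : c.p * (c.f (c.q * (x * c.p)) * (c.p * t))
    = c.p * (c.f c.q * (c.q * (x * (c.p * t)))) := by
  linear_combination (norm := noncomm_ring) c.n4 x * t

lemma nM2 (x : R) : c.q * (c.f c.q * (c.q * (x * c.p)))
    = c.q * (x * (c.p * (c.f c.p * c.p))) := by
  have h := c.mirror.mM2 x
  simp only [mirror_f, mirror_p, mirror_q] at h
  exact h

lemma n3 (hprime : ∀ a b : R, (∀ r : R, a * r * b = 0) → a = 0 ∨ b = 0)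
    (x : R) : c.p * (c.f (c.q * (x * c.p)) * c.q) = 0 := by
  have h := c.mirror.m3 hprime x
  simp only [mirror_f, mirror_p, mirror_q] at h
  exact h

lemma n3' (hprime : ∀ a b : R, (∀ r : R, a * r * b = 0) → a = 0 ∨ b = 0)
    (x t : R) : c.p * (c.f (c.q * (x * c.p)) * (c.q * t)) = 0 := by
  linear_combination (norm := noncomm_ring) c.n3 hprime x * t

/-! ### sandwich-form w-family and v-family -/

lemma hww1 (y : R) : c.q * (c.q * (y * c.q)) = c.q * (y * c.q) := c.hq2' _
lemma hww2 (y : R) : (c.q * (y * c.q)) * c.q = c.q * (y * c.q) := by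
  simp only [mul_assoc, c.hq2]
lemma hvv1 (y : R) : c.p * (c.p * (y * c.p)) = c.p * (y * c.p) := c.hp2' _
lemma hvv2 (y : R) : (c.p * (y * c.p)) * c.p = c.p * (y * c.p) := by
  simp only [mul_assoc, c.hp2]

lemma rb1 (y : R) : c.p * (c.f (c.q * (y * c.q)) * c.p) = 0 := by
  linear_combination (norm := noncomm_ring) c.b1 _ (c.hww1 y) (c.hww2 y)
lemma rb1' (y t : R) : c.p * (c.f (c.q * (y * c.q)) * (c.p * t)) = 0 := by
  linear_combination (norm := noncomm_ring) c.rb1 y * t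
lemma rb2 (y : R) : c.p * (c.f (c.q * (y * c.q)) * c.q)
    = -(c.p * (c.f c.p * (c.q * (y * c.q)))) := by
  linear_combination (norm := noncomm_ring) c.b2 _ (c.hww1 y) (c.hww2 y)
lemma rb2' (y t : R) : c.p * (c.f (c.q * (y * c.q)) * (c.q * t))
    = -(c.p * (c.f c.p * (c.q * (y * (c.q * t))))) := by
  linear_combination (norm := noncomm_ring) c.rb2 y * t
lemma rb3 (y : R) : c.q * (c.f (c.q * (y * c.q)) * c.p)
    = -(c.q * (y * (c.q * (c.f c.p * c.p)))) := by
  linear_combination (norm := noncomm_ring) c.b3 _ (c.hww1 y) (c.hww2 y)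
lemma rb3' (y t : R) : c.q * (c.f (c.q * (y * c.q)) * (c.p * t))
    = -(c.q * (y * (c.q * (c.f c.p * (c.p * t))))) := by
  linear_combination (norm := noncomm_ring) c.rb3 y * t

lemma rv1 (y : R) : c.q * (c.f (c.p * (y * c.p)) * c.q) = 0 := by
  linear_combination (norm := noncomm_ring) c.v1 _ (c.hvv1 y) (c.hvv2 y)
lemma rv1' (y t : R) : c.q * (c.f (c.p * (y * c.p)) * (c.q * t)) = 0 := by
  linear_combination (norm := noncomm_ring) c.rv1 y * t
lemma rv2 (y : R) : c.q * (c.f (c.p * (y * c.p)) * c.p)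
    = c.q * (c.f c.p * (c.p * (y * c.p))) := by
  linear_combination (norm := noncomm_ring) c.v2 _ (c.hvv1 y) (c.hvv2 y)
    + (c.q * c.f c.p) * c.hp2 * (y * c.p)
lemma rv2' (y t : R) : c.q * (c.f (c.p * (y * c.p)) * (c.p * t))
    = c.q * (c.f c.p * (c.p * (y * (c.p * t)))) := by
  linear_combination (norm := noncomm_ring) c.rv2 y * t
lemma rv3 (y : R) : c.p * (c.f (c.p * (y * c.p)) * c.q)
    = c.p * (y * (c.p * (c.f c.p * c.q))) := by
  linear_combination (norm := noncomm_ring) c.v3 _ (c.hvv1 y) (c.hvv2 y)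
lemma rv3' (y t : R) : c.p * (c.f (c.p * (y * c.p)) * (c.q * t))
    = c.p * (y * (c.p * (c.f c.p * (c.q * t)))) := by
  linear_combination (norm := noncomm_ring) c.rv3 y * t

/-! ### the centre -/

lemma decEl (r : R) : r = c.p * r * c.p + c.p * r * c.q + c.q * r * c.p + c.q * r * c.q := by
  have h1 : (c.p + c.q) * (r * (c.p + c.q)) = r := by
    rw [c.hsum, mul_one, one_mul]
  linear_combination (norm := noncomm_ring) -h1

lemma hcc : c.f 1 = c.p * (c.f c.p * c.p) + c.q * (c.f c.q * c.q) := by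
  have hd := c.dec 1
  have h := c.hc
  linear_combination (norm := noncomm_ring) hd + c.p * h * c.p + c.p * h * c.q
    + c.q * h * c.p + c.q * h * c.q + c.a1 + c.a2 + c.a3 + c.a4

lemma centp (hprime : ∀ a b : R, (∀ r : R, a * r * b = 0) → a = 0 ∨ b = 0)
    (hq0 : c.q ≠ 0) (y : R) :
    c.p * (c.f c.p * (c.p * (y * c.p))) = c.p * (y * (c.p * (c.f c.p * c.p))) := by
  have key : ∀ z : R, c.p * (c.f c.p * (c.p * (y * (c.p * (z * c.q)))))
      = c.p * (y * (c.p * (c.f c.p * (c.p * (z * c.q))))) := by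
    intro z
    have h1 := c.mM2 (y * (c.p * (z * c.q)))
    simp only [mul_assoc, c.hq2, c.hq2', c.hp2, c.hp2'] at h1
    linear_combination (norm := noncomm_ring) h1 - (c.p * y) * c.mM2 z
  have hX : ∀ r : R, (c.p * (c.f c.p * (c.p * (y * c.p)))
      - c.p * (y * (c.p * (c.f c.p * c.p)))) * r * c.q = 0 := by
    intro r
    linear_combination (norm := noncomm_ring) key r
  rcases hprime _ _ hX with h | h
  · linear_combination (norm := noncomm_ring) h
  · exact absurd h hq0

lemma centq (hprime : ∀ a b : R, (∀ r : R, a * r * b = 0) → a = 0 ∨ b = 0)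
    (hp0 : c.p ≠ 0) (y : R) :
    c.q * (c.f c.q * (c.q * (y * c.q))) = c.q * (y * (c.q * (c.f c.q * c.q))) := by
  have h := c.mirror.centp hprime hp0 y
  simp only [mirror_f, mirror_p, mirror_q] at h
  exact h

lemma f1L (t : R) : c.f 1 * (c.p * t) = c.p * (c.f c.p * (c.p * t)) := by
  linear_combination (norm := noncomm_ring) c.hcc * (c.p * t)
    + (c.p * c.f c.p) * c.hp2 * t + (c.q * c.f c.q) * c.hqp * t

lemma f1Lq (t : R) : c.f 1 * (c.q * t) = c.q * (c.f c.q * (c.q * t)) := by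
  linear_combination (norm := noncomm_ring) c.hcc * (c.q * t)
    + (c.q * c.f c.q) * c.hq2 * t + (c.p * c.f c.p) * c.hpq * t

lemma f1R (t : R) : (t * c.p) * c.f 1 = t * (c.p * (c.f c.p * c.p)) := by
  linear_combination (norm := noncomm_ring) (t * c.p) * c.hcc
    + t * c.hp2 * (c.f c.p * c.p) + t * c.hpq * (c.f c.q * c.q)

lemma f1Rq (t : R) : (t * c.q) * c.f 1 = t * (c.q * (c.f c.q * c.q)) := by
  linear_combination (norm := noncomm_ring) (t * c.q) * c.hcc
    + t * c.hq2 * (c.f c.q * c.q) + t * c.hqp * (c.f c.p * c.p)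

lemma cent1 (hprime : ∀ a b : R, (∀ r : R, a * r * b = 0) → a = 0 ∨ b = 0)
    (hp0 : c.p ≠ 0) (hq0 : c.q ≠ 0) (r : R) : c.f 1 * r = r * c.f 1 := by
  have hd := c.decEl r
  linear_combination (norm := noncomm_ring) (c.f 1) * hd - hd * (c.f 1)
    + c.f1L (r * c.p) - c.f1R (c.p * r) + c.centp hprime hq0 r
    + c.f1L (r * c.q) - c.f1Rq (c.p * r) + c.mM2 r
    + c.f1Lq (r * c.p) - c.f1R (c.q * r) + c.nM2 r
    + c.f1Lq (r * c.q) - c.f1Rq (c.q * r) + c.centq hprime hp0 r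

/-! ### product laws L3, L4 and mirrors -/

lemma L4 (x y : R) :
    c.p * (c.f (c.p * (x * (c.q * (y * c.q)))) * c.q)
      = c.p * (c.f (c.p * (x * c.q)) * (c.q * (y * c.q)))
      + c.p * (x * (c.q * (c.f (c.q * (y * c.q)) * c.q)))
      - c.p * (c.f c.p * (c.p * (x * (c.q * (y * c.q))))) := by
  have h := c.conj2 (c.p * (x * c.q)) (c.q * (y * c.q))
    (c.sw1 x) (c.sw2 x) (c.hww1 y) (c.hww2 y)
  unfold B at h
  have h' := congrArg (fun t => c.p * t * c.q) h
  simp only [mul_add, add_mul, mul_sub, sub_mul, mul_neg, neg_mul, mul_assoc,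
    mul_zero, zero_mul, mul_one, one_mul, add_zero, zero_add,
    c.hp2, c.hq2, c.hpq, c.hqp, c.hp2', c.hq2', c.hpq', c.hqp',
    c.ra1, c.ra1', c.ra2, c.ra2', c.ra3, c.ra3', c.ra4, c.ra4',
    c.rb1, c.rb1'] at h'
  linear_combination (norm := noncomm_ring) -h'

lemma L3 (x y : R) :
    c.p * (c.f (c.p * (y * (c.p * (x * c.q)))) * c.q)
      = c.p * (c.f (c.p * (y * c.p)) * (c.p * (x * c.q)))
      + c.p * (y * (c.p * (c.f (c.p * (x * c.q)) * c.q)))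
      - c.p * (y * (c.p * (c.f c.p * (c.p * (x * c.q))))) := by
  have h := c.conj3 (c.p * (x * c.q)) (c.p * (y * c.p))
    (c.sw1 x) (c.sw2 x) (c.hvv1 y) (c.hvv2 y)
  unfold B at h
  have h' := congrArg (fun t => c.p * t * c.q) h
  simp only [mul_add, add_mul, mul_sub, sub_mul, mul_neg, neg_mul, mul_assoc,
    mul_zero, zero_mul, mul_one, one_mul, add_zero, zero_add,
    c.hp2, c.hq2, c.hpq, c.hqp, c.hp2', c.hq2', c.hpq', c.hqp',
    c.ra1, c.ra1', c.ra2, c.ra2', c.ra3, c.ra3', c.ra4, c.ra4',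
    c.rv1, c.rv1'] at h'
  linear_combination (norm := noncomm_ring) -h' + (c.p * y) * c.mM2 x

lemma L6 (x y : R) :
    c.q * (c.f (c.q * (x * (c.p * (y * c.p)))) * c.p)
      = c.q * (c.f (c.q * (x * c.p)) * (c.p * (y * c.p)))
      + c.q * (x * (c.p * (c.f (c.p * (y * c.p)) * c.p)))
      - c.q * (c.f c.q * (c.q * (x * (c.p * (y * c.p))))) := by
  have h := c.mirror.L4 x y
  simp only [mirror_f, mirror_p, mirror_q] at h
  exact h

lemma L5 (x y : R) :
    c.q * (c.f (c.q * (y * (c.q * (x * c.p)))) * c.p)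
      = c.q * (c.f (c.q * (y * c.q)) * (c.q * (x * c.p)))
      + c.q * (y * (c.q * (c.f (c.q * (x * c.p)) * c.p)))
      - c.q * (y * (c.q * (c.f c.q * (c.q * (x * c.p))))) := by
  have h := c.mirror.L3 x y
  simp only [mirror_f, mirror_p, mirror_q] at h
  exact h

lemma L6' (x y t : R) :
    c.q * (c.f (c.q * (x * (c.p * (y * c.p)))) * (c.p * t))
      = c.q * (c.f (c.q * (x * c.p)) * (c.p * (y * (c.p * t))))
      + c.q * (x * (c.p * (c.f (c.p * (y * c.p)) * (c.p * t))))
      - c.q * (c.f c.q * (c.q * (x * (c.p * (y * (c.p * t)))))) := by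
  linear_combination (norm := noncomm_ring) c.L6 x y * t

/-! ### the diagonal product law L1 (and mirror L2) -/

lemma L1 (hprime : ∀ a b : R, (∀ r : R, a * r * b = 0) → a = 0 ∨ b = 0)
    (hq0 : c.q ≠ 0) (y y' : R) :
    c.p * (c.f (c.p * (y * (c.p * (y' * c.p)))) * c.p)
      = c.p * (c.f (c.p * (y * c.p)) * (c.p * (y' * c.p)))
      + c.p * (y * (c.p * (c.f (c.p * (y' * c.p)) * c.p)))
      - c.p * (y * (c.p * (c.f c.p * (c.p * (y' * c.p))))) := by
  have key : ∀ z : R, c.q * z *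
      (c.p * (c.f (c.p * (y * (c.p * (y' * c.p)))) * c.p)
      - c.p * (c.f (c.p * (y * c.p)) * (c.p * (y' * c.p)))
      - c.p * (y * (c.p * (c.f (c.p * (y' * c.p)) * c.p)))
      + c.p * (c.f c.p * (c.p * (y * (c.p * (y' * c.p)))))) = 0 := by
    intro z
    have e1 := c.L6 z (y * (c.p * (y' * c.p)))
    simp only [mul_assoc, c.hp2, c.hq2, c.hp2', c.hq2'] at e1
    have e2 := c.L6 (z * (c.p * (y * c.p))) y'
    simp only [mul_assoc, c.hp2, c.hq2, c.hp2', c.hq2'] at e2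
    have e3 := c.L6' z y (y' * c.p)
    linear_combination (norm := noncomm_ring) -e1 + e2 + e3
      - c.nM2 z * (y * (c.p * (y' * c.p)))
  rcases hprime _ _ key with h | h
  · exact absurd h hq0
  · linear_combination (norm := noncomm_ring) h
      - c.centp hprime hq0 y * (y' * c.p)

lemma L2 (hprime : ∀ a b : R, (∀ r : R, a * r * b = 0) → a = 0 ∨ b = 0)
    (hp0 : c.p ≠ 0) (y y' : R) :
    c.q * (c.f (c.q * (y * (c.q * (y' * c.q)))) * c.q)
      = c.q * (c.f (c.q * (y * c.q)) * (c.q * (y' * c.q)))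
      + c.q * (y * (c.q * (c.f (c.q * (y' * c.q)) * c.q)))
      - c.q * (y * (c.q * (c.f c.q * (c.q * (y' * c.q))))) := by
  have h := c.mirror.L1 hprime hp0 y y'
  simp only [mirror_f, mirror_p, mirror_q] at h
  exact h

/-! ### rules for components of `f 1` -/

lemma rf1a : c.p * (c.f 1 * c.p) = c.p * (c.f c.p * c.p) := by
  linear_combination (norm := noncomm_ring) c.p * c.hcc * c.p
    + c.hp2 * (c.f c.p * (c.p * c.p)) + (c.p * c.f c.p) * c.hp2
    + c.hpq * (c.f c.q * (c.q * c.p))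
lemma rf1a' (t : R) : c.p * (c.f 1 * (c.p * t)) = c.p * (c.f c.p * (c.p * t)) := by
  linear_combination (norm := noncomm_ring) c.rf1a * t
lemma rf1b : c.q * (c.f 1 * c.q) = c.q * (c.f c.q * c.q) := by
  have h := c.mirror.rf1a
  simp only [mirror_f, mirror_p, mirror_q] at h
  exact h
lemma rf1b' (t : R) : c.q * (c.f 1 * (c.q * t)) = c.q * (c.f c.q * (c.q * t)) := by
  linear_combination (norm := noncomm_ring) c.rf1b * t
lemma rf1c : c.p * (c.f 1 * c.q) = 0 := by
  linear_combination (norm := noncomm_ring) c.p * c.hc * c.q + c.a3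
lemma rf1c' (t : R) : c.p * (c.f 1 * (c.q * t)) = 0 := by
  linear_combination (norm := noncomm_ring) c.rf1c * t
lemma rf1d : c.q * (c.f 1 * c.p) = 0 := by
  have h := c.mirror.rf1c
  simp only [mirror_f, mirror_p, mirror_q] at h
  exact h
lemma rf1d' (t : R) : c.q * (c.f 1 * (c.p * t)) = 0 := by
  linear_combination (norm := noncomm_ring) c.rf1d * t

/-! ### general idempotent identity -/

lemma idem (e : R) (he : e * e = e) (hcent : c.f 1 * e = e * c.f 1) :
    c.f e = c.f e * e + e * c.f e - e * c.f 1 := by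
  have hz1 : e * (1 - e) = 0 := by rw [mul_sub, mul_one, he, sub_self]
  have hz2 : (1 - e) * e = 0 := by rw [sub_mul, one_mul, he, sub_self]
  have h := c.hB' _ _ hz1 hz2
  unfold B at h
  rw [map_sub] at h
  rw [← sub_eq_zero]
  refine c.h2 _ ?_
  linear_combination (norm := noncomm_ring) h - hcent

/-! ### the conjugated idempotent computation (towards L7) -/

lemma hE2 (x y : R) :
    ((1 + c.p * (x * c.q)) * (1 + c.q * (y * c.p)))
      * (c.p * ((1 - c.q * (y * c.p)) * (1 - c.p * (x * c.q))))
    = c.p - c.p * (x * c.q) + c.q * (y * c.p)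
      + (c.p * (x * c.q)) * (c.q * (y * c.p))
      - (c.q * (y * c.p)) * (c.p * (x * c.q))
      - (c.p * (x * c.q)) * (c.q * (y * c.p)) * (c.p * (x * c.q)) := by
  have hMM : (c.p * (x * c.q)) * (c.p * (x * c.q)) = 0 :=
    c.mul_q_p _ _ (c.sw2 x) (c.sw1 x)
  have hNN : (c.q * (y * c.p)) * (c.q * (y * c.p)) = 0 := by
    simp only [mul_assoc, c.hqp', c.hpq', mul_zero]
  have hpM : c.p * (c.p * (x * c.q)) = c.p * (x * c.q) := c.sw1 x
  have hpN : c.p * (c.q * (y * c.p)) = 0 := c.hpq' _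
  have hNp : (c.q * (y * c.p)) * c.p = c.q * (y * c.p) := by
    simp only [mul_assoc, c.hp2]
  have hMp : (c.p * (x * c.q)) * c.p = 0 := c.r0 (c.sw2 x)
  simp only [mul_add, add_mul, mul_sub, sub_mul, mul_neg, neg_mul, mul_assoc,
    mul_zero, zero_mul, mul_one, one_mul, add_zero, zero_add,
    c.hp2, c.hq2, c.hpq, c.hqp, c.hp2', c.hq2', c.hpq', c.hqp']
  abel
  
lemma hDC (x y : R) :
    ((1 - c.q * (y * c.p)) * (1 - c.p * (x * c.q)))
      * ((1 + c.p * (x * c.q)) * (1 + c.q * (y * c.p))) = 1 := by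
  have hMM : (c.p * (x * c.q)) * (c.p * (x * c.q)) = 0 :=
    c.mul_q_p _ _ (c.sw2 x) (c.sw1 x)
  have hNN : (c.q * (y * c.p)) * (c.q * (y * c.p)) = 0 := by
    simp only [mul_assoc, c.hqp', c.hpq', mul_zero]
  linear_combination (norm := noncomm_ring)
    -hNN - (1 - c.q * (y * c.p)) * hMM * (1 + c.q * (y * c.p))

set_option maxHeartbeats 4000000 in
lemma L7epp (hprime : ∀ a b : R, (∀ r : R, a * r * b = 0) → a = 0 ∨ b = 0)
    (hp0 : c.p ≠ 0) (hq0 : c.q ≠ 0) (x y : R) :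
    (c.p * (c.f (c.p * (x * (c.q * (y * c.p)))) * c.p)
      - c.p * (c.f (c.p * (x * c.q)) * (c.q * (y * c.p)))
      - c.p * (x * (c.q * (c.f (c.q * (y * c.p)) * c.p)))
      + c.p * (c.f c.p * (c.p * (x * (c.q * (y * c.p))))))
    + (c.p * (x * (c.q * (y * (c.p * (c.f (c.p * (x * (c.q * (y * c.p)))) * c.p)))))
      - c.p * (x * (c.q * (y * (c.p * (c.f (c.p * (x * c.q)) * (c.q * (y * c.p)))))))
      - c.p * (x * (c.q * (y * (c.p * (x * (c.q * (c.f (c.q * (y * c.p)) * c.p)))))))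
      + c.p * (x * (c.q * (y * (c.p * (c.f c.p * (c.p * (x * (c.q * (y * c.p)))))))))) = 0 := by
  obtain ⟨E, hEdef⟩ : ∃ E : R, E = c.p - c.p * (x * c.q) + c.q * (y * c.p)
      + (c.p * (x * c.q)) * (c.q * (y * c.p))
      - (c.q * (y * c.p)) * (c.p * (x * c.q))
      - (c.p * (x * c.q)) * (c.q * (y * c.p)) * (c.p * (x * c.q)) := ⟨_, rfl⟩
  have hEE : E * E = E := by
    rw [hEdef, ← c.hE2 x y]
    calc ((1 + c.p * (x * c.q)) * (1 + c.q * (y * c.p)))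
          * (c.p * ((1 - c.q * (y * c.p)) * (1 - c.p * (x * c.q))))
        * (((1 + c.p * (x * c.q)) * (1 + c.q * (y * c.p)))
          * (c.p * ((1 - c.q * (y * c.p)) * (1 - c.p * (x * c.q)))))
        = ((1 + c.p * (x * c.q)) * (1 + c.q * (y * c.p)))
          * (c.p * ((((1 - c.q * (y * c.p)) * (1 - c.p * (x * c.q)))
            * ((1 + c.p * (x * c.q)) * (1 + c.q * (y * c.p))))
          * (c.p * ((1 - c.q * (y * c.p)) * (1 - c.p * (x * c.q)))))) := by
          noncomm_ring
      _ = ((1 + c.p * (x * c.q)) * (1 + c.q * (y * c.p)))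
          * (c.p * ((1 - c.q * (y * c.p)) * (1 - c.p * (x * c.q)))) := by
          rw [c.hDC x y, one_mul, c.hp2']
  have hcent := c.cent1 hprime hp0 hq0 E
  have hIdem := c.idem E hEE hcent
  have hfE : c.f E = c.f c.p - c.f (c.p * (x * c.q)) + c.f (c.q * (y * c.p))
      + c.f ((c.p * (x * c.q)) * (c.q * (y * c.p)))
      - c.f ((c.q * (y * c.p)) * (c.p * (x * c.q)))
      - c.f ((c.p * (x * c.q)) * (c.q * (y * c.p)) * (c.p * (x * c.q))) := by
    rw [hEdef]; simp only [map_sub, map_add]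
  have hpp := congrArg (fun t => c.p * t * c.p) hIdem
  rw [hfE, hEdef] at hpp
  -- instances for compound arguments
  have iv1 := c.rv1 (x * (c.q * y)); have iv1' := c.rv1' (x * (c.q * y))
  have iv2 := c.rv2 (x * (c.q * y)); have iv2' := c.rv2' (x * (c.q * y))
  have iv3 := c.rv3 (x * (c.q * y)); have iv3' := c.rv3' (x * (c.q * y))
  have ib1 := c.rb1 (y * (c.p * x)); have ib1' := c.rb1' (y * (c.p * x))
  have ib2 := c.rb2 (y * (c.p * x)); have ib2' := c.rb2' (y * (c.p * x))
  have ib3 := c.rb3 (y * (c.p * x)); have ib3' := c.rb3' (y * (c.p * x))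
  have im1 := c.m1 (x * (c.q * (y * (c.p * x))))
  have im1' := c.m1' (x * (c.q * (y * (c.p * x))))
  have im4 := c.m4 (x * (c.q * (y * (c.p * x))))
  have im4' := c.m4' (x * (c.q * (y * (c.p * x))))
  have im3 := c.m3 hprime (x * (c.q * (y * (c.p * x))))
  have im3' := c.m3' hprime (x * (c.q * (y * (c.p * x))))
  simp only [mul_assoc] at iv1 iv1' iv2 iv2' iv3 iv3' ib1 ib1' ib2 ib2' ib3 ib3' im1 im1' im4 im4' im3 im3'
  simp only [mul_add, add_mul, mul_sub, sub_mul, mul_neg, neg_mul, mul_assoc,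
    mul_zero, zero_mul, mul_one, one_mul, add_zero, zero_add, neg_neg,
    c.hp2, c.hq2, c.hpq, c.hqp, c.hp2', c.hq2', c.hpq', c.hqp',
    c.ra1, c.ra1', c.ra2, c.ra2', c.ra3, c.ra3', c.ra4, c.ra4',
    c.rf1a, c.rf1a', c.rf1b, c.rf1b', c.rf1c, c.rf1c', c.rf1d, c.rf1d',
    c.m1 x, c.m1' x, c.m4 x, c.m4' x, c.m3 hprime x, c.m3' hprime x,
    c.n1 y, c.n1' y, c.n4 y, c.n4' y, c.n3 hprime y, c.n3' hprime y,
    iv1, iv1', iv2, iv2', iv3, iv3', ib1, ib1', ib2, ib2', ib3, ib3',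
    im1, im1', im4, im4', im3, im3'] at hpp
  have iL3 := c.L3 x (x * (c.q * y))
  simp only [mul_assoc] at iL3
  linear_combination (norm := noncomm_ring) -hpp + iL3 * (y * c.p)

set_option maxHeartbeats 1000000 in
lemma L7epp' (hprime : ∀ a b : R, (∀ r : R, a * r * b = 0) → a = 0 ∨ b = 0)
    (hp0 : c.p ≠ 0) (hq0 : c.q ≠ 0) (x y : R) :
    (c.p * (c.f (c.p * (x * (c.q * (y * c.p)))) * c.p)
      - c.p * (c.f (c.p * (x * c.q)) * (c.q * (y * c.p)))
      - c.p * (x * (c.q * (c.f (c.q * (y * c.p)) * c.p)))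
      + c.p * (c.f c.p * (c.p * (x * (c.q * (y * c.p))))))
    + (c.p * (x * (c.q * y))) *
      (c.p * (c.f (c.p * (x * (c.q * (y * c.p)))) * c.p)
      - c.p * (c.f (c.p * (x * c.q)) * (c.q * (y * c.p)))
      - c.p * (x * (c.q * (c.f (c.q * (y * c.p)) * c.p)))
      + c.p * (c.f c.p * (c.p * (x * (c.q * (y * c.p)))))) = 0 := by
  linear_combination (norm := noncomm_ring) c.L7epp hprime hp0 hq0 x y

set_option maxHeartbeats 1000000 in
lemma hXvm (hprime : ∀ a b : R, (∀ r : R, a * r * b = 0) → a = 0 ∨ b = 0)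
    (hq0 : c.q ≠ 0) (x y z : R) :
    c.p * (c.f (c.p * (z * (c.p * (x * (c.q * (y * c.p)))))) * c.p)
      - c.p * (c.f (c.p * (z * (c.p * (x * c.q)))) * (c.q * (y * c.p)))
      - c.p * (z * (c.p * (x * (c.q * (c.f (c.q * (y * c.p)) * c.p)))))
      + c.p * (c.f c.p * (c.p * (z * (c.p * (x * (c.q * (y * c.p)))))))
    = (c.p * z) *
      (c.p * (c.f (c.p * (x * (c.q * (y * c.p)))) * c.p)
      - c.p * (c.f (c.p * (x * c.q)) * (c.q * (y * c.p)))
      - c.p * (x * (c.q * (c.f (c.q * (y * c.p)) * c.p)))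
      + c.p * (c.f c.p * (c.p * (x * (c.q * (y * c.p)))))) := by
  have h1 := c.L1 hprime hq0 z (x * (c.q * y))
  simp only [mul_assoc] at h1
  have h3 := c.L3 x z
  have hcp := c.centp hprime hq0 z
  linear_combination (norm := noncomm_ring) h1 - h3 * (y * c.p)
    + hcp * (x * (c.q * (y * c.p)))

set_option maxHeartbeats 2000000 in
lemma L7 (hprime : ∀ a b : R, (∀ r : R, a * r * b = 0) → a = 0 ∨ b = 0)
    (hp0 : c.p ≠ 0) (hq0 : c.q ≠ 0) (x y : R) :
    c.p * (c.f (c.p * (x * (c.q * (y * c.p)))) * c.p)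
      = c.p * (c.f (c.p * (x * c.q)) * (c.q * (y * c.p)))
      + c.p * (x * (c.q * (c.f (c.q * (y * c.p)) * c.p)))
      - c.p * (c.f c.p * (c.p * (x * (c.q * (y * c.p))))) := by
  obtain ⟨P, hP⟩ : ∃ t : R, t = c.p * (c.f (c.p * (x * (c.q * (y * c.p)))) * c.p)
      - c.p * (c.f (c.p * (x * c.q)) * (c.q * (y * c.p)))
      - c.p * (x * (c.q * (c.f (c.q * (y * c.p)) * c.p)))
      + c.p * (c.f c.p * (c.p * (x * (c.q * (y * c.p))))) := ⟨_, rfl⟩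
  have hpP : c.p * P = P := by
    rw [hP]
    simp only [mul_add, mul_sub, c.hp2', c.hp2]
  have h0 : P + (c.p * (x * (c.q * y))) * P = 0 := by
    rw [hP]; exact c.L7epp' hprime hp0 hq0 x y
  have hA : ∀ z : R, (c.p * z) * P + ((c.p * z) * (c.p * (x * (c.q * y)))) * ((c.p * z) * P) = 0 := by
    intro z
    have h := c.L7epp' hprime hp0 hq0 (z * (c.p * x)) y
    simp only [mul_assoc] at h
    have hx := c.hXvm hprime hq0 x y z
    rw [← hP] at hx
    linear_combination (norm := noncomm_ring) h - hx
      - ((c.p * z) * (c.p * (x * (c.q * y)))) * hx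
  have hB : ∀ z : R, (c.p * z) * P + ((c.p * z) * (c.p * (x * (c.q * y)))) * P = 0 := by
    intro z
    linear_combination (norm := noncomm_ring) (c.p * z) * h0
  have hD : ∀ z z' : R,
      ((c.p * z) * (c.p * (x * (c.q * y)))) * ((c.p * z') * P)
      + ((c.p * z') * (c.p * (x * (c.q * y)))) * ((c.p * z) * P) = 0 := by
    intro z z'
    have h1 := hA (z + z')
    simp only [mul_add, add_mul] at h1
    have h2 := hA z
    have h3 := hA z'
    have h4 := hB (z + z')
    simp only [mul_add, add_mul] at h4
    have h5 := hB z
    have h6 := hB z'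
    linear_combination (norm := noncomm_ring) h1 - h2 - h3 - h4 + h5 + h6
  have hF : ∀ z : R, (c.p * z) * P - (c.p * (x * (c.q * y))) * ((c.p * z) * P) = 0 := by
    intro z
    have h1 := hD z 1
    simp only [mul_one, c.hp2, c.hp2'] at h1
    have h2 := hB z
    -- h1 : ((p*z)*C)*(p*P) + C'*((p*z)*P) = 0 roughly; combine with hpP and h2
    linear_combination (norm := noncomm_ring) -h1 + h2
      + ((c.p * z) * (c.p * (x * (c.q * y)))) * hpP
  have hab : ∀ r : R, (c.p - c.p * (x * (c.q * (y * c.p)))) * r * P = 0 := by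
    intro r
    linear_combination (norm := noncomm_ring) hF r
  rcases hprime _ _ hab with h | h
  · have h2 : P + P = 0 := by
      linear_combination (norm := noncomm_ring) h0 + h * P - hpP
        + (c.p * (x * (c.q * y))) * hpP
    have := c.h2 _ h2
    rw [hP] at this
    linear_combination (norm := noncomm_ring) this
  · rw [hP] at h
    linear_combination (norm := noncomm_ring) h

lemma L8 (hprime : ∀ a b : R, (∀ r : R, a * r * b = 0) → a = 0 ∨ b = 0)
    (hp0 : c.p ≠ 0) (hq0 : c.q ≠ 0) (x y : R) :
    c.q * (c.f (c.q * (x * (c.p * (y * c.q)))) * c.q)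
      = c.q * (c.f (c.q * (x * c.p)) * (c.p * (y * c.q)))
      + c.q * (x * (c.p * (c.f (c.p * (y * c.q)) * c.q)))
      - c.q * (c.f c.q * (c.q * (x * (c.p * (y * c.q))))) := by
  have h := c.mirror.L7 hprime hq0 hp0 x y
  simp only [mirror_f, mirror_p, mirror_q] at h
  exact h

lemma dec' (x : R) : c.f x =
    c.p * (c.f x * c.p) + c.p * (c.f x * c.q) + c.q * (c.f x * c.p) + c.q * (c.f x * c.q) := by
  linear_combination (norm := noncomm_ring) c.dec x

lemma decEl' (r : R) : r = c.p * (r * c.p) + c.p * (r * c.q) + c.q * (r * c.p) + c.q * (r * c.q) := by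
  linear_combination (norm := noncomm_ring) c.decEl r

/-! ### the sixteen case lemmas (eight up to mirror symmetry) -/

set_option maxHeartbeats 1000000 in
lemma case_vv (hprime : ∀ a b : R, (∀ r : R, a * r * b = 0) → a = 0 ∨ b = 0)
    (hp0 : c.p ≠ 0) (hq0 : c.q ≠ 0) (a b : R) :
    c.f ((c.p * (a * c.p)) * (c.p * (b * c.p)))
      = c.f (c.p * (a * c.p)) * (c.p * (b * c.p))
      + (c.p * (a * c.p)) * c.f (c.p * (b * c.p))
      - (c.p * (a * c.p)) * (c.f 1 * (c.p * (b * c.p))) := by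
  have iv1 := c.rv1 (a * (c.p * b)); have iv1' := c.rv1' (a * (c.p * b))
  have iv2 := c.rv2 (a * (c.p * b)); have iv2' := c.rv2' (a * (c.p * b))
  have iv3 := c.rv3 (a * (c.p * b)); have iv3' := c.rv3' (a * (c.p * b))
  simp only [mul_assoc] at iv1 iv1' iv2 iv2' iv3 iv3'
  have iL := c.L1 hprime hq0 a b
  calc c.f ((c.p * (a * c.p)) * (c.p * (b * c.p)))
      = (c.p + c.q) * (c.f ((c.p * (a * c.p)) * (c.p * (b * c.p))) * (c.p + c.q)) := by
        rw [c.hsum, mul_one, one_mul]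
    _ = (c.p + c.q) * ((c.f (c.p * (a * c.p)) * (c.p * (b * c.p))
      + (c.p * (a * c.p)) * c.f (c.p * (b * c.p))
      - (c.p * (a * c.p)) * (c.f 1 * (c.p * (b * c.p)))) * (c.p + c.q)) := by
        simp only [iv1, iv1', iv2, iv2', iv3, iv3', iL, c.rv1 a, c.rv1' a, c.rv2 a, c.rv2' a, c.rv3 a, c.rv3' a, c.rv1 b, c.rv1' b, c.rv2 b, c.rv2' b, c.rv3 b, c.rv3' b,
          mul_add, add_mul, mul_sub, sub_mul, mul_neg, neg_mul, mul_assoc,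
          mul_zero, zero_mul, mul_one, one_mul, add_zero, zero_add, neg_neg, map_zero,
          c.hp2, c.hq2, c.hpq, c.hqp, c.hp2', c.hq2', c.hpq', c.hqp',
          c.ra1, c.ra1', c.ra2, c.ra2', c.ra3, c.ra3', c.ra4, c.ra4',
          c.rf1a, c.rf1a', c.rf1b, c.rf1b', c.rf1c, c.rf1c', c.rf1d, c.rf1d']
        noncomm_ring
    _ = c.f (c.p * (a * c.p)) * (c.p * (b * c.p))
      + (c.p * (a * c.p)) * c.f (c.p * (b * c.p))
      - (c.p * (a * c.p)) * (c.f 1 * (c.p * (b * c.p))) := by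
        rw [c.hsum, mul_one, one_mul]

set_option maxHeartbeats 1000000 in
lemma case_vm (hprime : ∀ a b : R, (∀ r : R, a * r * b = 0) → a = 0 ∨ b = 0)
    (hp0 : c.p ≠ 0) (hq0 : c.q ≠ 0) (a b : R) :
    c.f ((c.p * (a * c.p)) * (c.p * (b * c.q)))
      = c.f (c.p * (a * c.p)) * (c.p * (b * c.q))
      + (c.p * (a * c.p)) * c.f (c.p * (b * c.q))
      - (c.p * (a * c.p)) * (c.f 1 * (c.p * (b * c.q))) := by
  have i1 := c.m1 (a * (c.p * b)); have i1' := c.m1' (a * (c.p * b))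
  have i4 := c.m4 (a * (c.p * b)); have i4' := c.m4' (a * (c.p * b))
  have i3 := c.m3 hprime (a * (c.p * b)); have i3' := c.m3' hprime (a * (c.p * b))
  simp only [mul_assoc] at i1 i1' i4 i4' i3 i3'
  have iL := c.L3 b a
  calc c.f ((c.p * (a * c.p)) * (c.p * (b * c.q)))
      = (c.p + c.q) * (c.f ((c.p * (a * c.p)) * (c.p * (b * c.q))) * (c.p + c.q)) := by
        rw [c.hsum, mul_one, one_mul]
    _ = (c.p + c.q) * ((c.f (c.p * (a * c.p)) * (c.p * (b * c.q))
      + (c.p * (a * c.p)) * c.f (c.p * (b * c.q))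
      - (c.p * (a * c.p)) * (c.f 1 * (c.p * (b * c.q)))) * (c.p + c.q)) := by
        simp only [i1, i1', i4, i4', i3, i3', iL, c.rv1 a, c.rv1' a, c.rv2 a, c.rv2' a, c.rv3 a, c.rv3' a, c.m1 b, c.m1' b, c.m4 b, c.m4' b, c.m3 hprime b, c.m3' hprime b,
          mul_add, add_mul, mul_sub, sub_mul, mul_neg, neg_mul, mul_assoc,
          mul_zero, zero_mul, mul_one, one_mul, add_zero, zero_add, neg_neg, map_zero,
          c.hp2, c.hq2, c.hpq, c.hqp, c.hp2', c.hq2', c.hpq', c.hqp',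
          c.ra1, c.ra1', c.ra2, c.ra2', c.ra3, c.ra3', c.ra4, c.ra4',
          c.rf1a, c.rf1a', c.rf1b, c.rf1b', c.rf1c, c.rf1c', c.rf1d, c.rf1d']
        noncomm_ring
    _ = c.f (c.p * (a * c.p)) * (c.p * (b * c.q))
      + (c.p * (a * c.p)) * c.f (c.p * (b * c.q))
      - (c.p * (a * c.p)) * (c.f 1 * (c.p * (b * c.q))) := by
        rw [c.hsum, mul_one, one_mul]

set_option maxHeartbeats 1000000 in
lemma case_vn (hprime : ∀ a b : R, (∀ r : R, a * r * b = 0) → a = 0 ∨ b = 0)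
    (hp0 : c.p ≠ 0) (hq0 : c.q ≠ 0) (a b : R) :
    c.f ((c.p * (a * c.p)) * (c.q * (b * c.p)))
      = c.f (c.p * (a * c.p)) * (c.q * (b * c.p))
      + (c.p * (a * c.p)) * c.f (c.q * (b * c.p))
      - (c.p * (a * c.p)) * (c.f 1 * (c.q * (b * c.p))) := by
  calc c.f ((c.p * (a * c.p)) * (c.q * (b * c.p)))
      = (c.p + c.q) * (c.f ((c.p * (a * c.p)) * (c.q * (b * c.p))) * (c.p + c.q)) := by
        rw [c.hsum, mul_one, one_mul]
    _ = (c.p + c.q) * ((c.f (c.p * (a * c.p)) * (c.q * (b * c.p))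
      + (c.p * (a * c.p)) * c.f (c.q * (b * c.p))
      - (c.p * (a * c.p)) * (c.f 1 * (c.q * (b * c.p)))) * (c.p + c.q)) := by
        simp only [c.rv1 a, c.rv1' a, c.rv2 a, c.rv2' a, c.rv3 a, c.rv3' a, c.n1 b, c.n1' b, c.n4 b, c.n4' b, c.n3 hprime b, c.n3' hprime b,
          mul_add, add_mul, mul_sub, sub_mul, mul_neg, neg_mul, mul_assoc,
          mul_zero, zero_mul, mul_one, one_mul, add_zero, zero_add, neg_neg, map_zero,
          c.hp2, c.hq2, c.hpq, c.hqp, c.hp2', c.hq2', c.hpq', c.hqp',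
          c.ra1, c.ra1', c.ra2, c.ra2', c.ra3, c.ra3', c.ra4, c.ra4',
          c.rf1a, c.rf1a', c.rf1b, c.rf1b', c.rf1c, c.rf1c', c.rf1d, c.rf1d']
        noncomm_ring
    _ = c.f (c.p * (a * c.p)) * (c.q * (b * c.p))
      + (c.p * (a * c.p)) * c.f (c.q * (b * c.p))
      - (c.p * (a * c.p)) * (c.f 1 * (c.q * (b * c.p))) := by
        rw [c.hsum, mul_one, one_mul]

set_option maxHeartbeats 1000000 in
lemma case_vw (hprime : ∀ a b : R, (∀ r : R, a * r * b = 0) → a = 0 ∨ b = 0)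
    (hp0 : c.p ≠ 0) (hq0 : c.q ≠ 0) (a b : R) :
    c.f ((c.p * (a * c.p)) * (c.q * (b * c.q)))
      = c.f (c.p * (a * c.p)) * (c.q * (b * c.q))
      + (c.p * (a * c.p)) * c.f (c.q * (b * c.q))
      - (c.p * (a * c.p)) * (c.f 1 * (c.q * (b * c.q))) := by
  calc c.f ((c.p * (a * c.p)) * (c.q * (b * c.q)))
      = (c.p + c.q) * (c.f ((c.p * (a * c.p)) * (c.q * (b * c.q))) * (c.p + c.q)) := by
        rw [c.hsum, mul_one, one_mul]
    _ = (c.p + c.q) * ((c.f (c.p * (a * c.p)) * (c.q * (b * c.q))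
      + (c.p * (a * c.p)) * c.f (c.q * (b * c.q))
      - (c.p * (a * c.p)) * (c.f 1 * (c.q * (b * c.q)))) * (c.p + c.q)) := by
        simp only [c.rv1 a, c.rv1' a, c.rv2 a, c.rv2' a, c.rv3 a, c.rv3' a, c.rb1 b, c.rb1' b, c.rb2 b, c.rb2' b, c.rb3 b, c.rb3' b,
          mul_add, add_mul, mul_sub, sub_mul, mul_neg, neg_mul, mul_assoc,
          mul_zero, zero_mul, mul_one, one_mul, add_zero, zero_add, neg_neg, map_zero,
          c.hp2, c.hq2, c.hpq, c.hqp, c.hp2', c.hq2', c.hpq', c.hqp',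
          c.ra1, c.ra1', c.ra2, c.ra2', c.ra3, c.ra3', c.ra4, c.ra4',
          c.rf1a, c.rf1a', c.rf1b, c.rf1b', c.rf1c, c.rf1c', c.rf1d, c.rf1d']
        noncomm_ring
    _ = c.f (c.p * (a * c.p)) * (c.q * (b * c.q))
      + (c.p * (a * c.p)) * c.f (c.q * (b * c.q))
      - (c.p * (a * c.p)) * (c.f 1 * (c.q * (b * c.q))) := by
        rw [c.hsum, mul_one, one_mul]

set_option maxHeartbeats 1000000 in
lemma case_mv (hprime : ∀ a b : R, (∀ r : R, a * r * b = 0) → a = 0 ∨ b = 0)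
    (hp0 : c.p ≠ 0) (hq0 : c.q ≠ 0) (a b : R) :
    c.f ((c.p * (a * c.q)) * (c.p * (b * c.p)))
      = c.f (c.p * (a * c.q)) * (c.p * (b * c.p))
      + (c.p * (a * c.q)) * c.f (c.p * (b * c.p))
      - (c.p * (a * c.q)) * (c.f 1 * (c.p * (b * c.p))) := by
  calc c.f ((c.p * (a * c.q)) * (c.p * (b * c.p)))
      = (c.p + c.q) * (c.f ((c.p * (a * c.q)) * (c.p * (b * c.p))) * (c.p + c.q)) := by
        rw [c.hsum, mul_one, one_mul]
    _ = (c.p + c.q) * ((c.f (c.p * (a * c.q)) * (c.p * (b * c.p))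
      + (c.p * (a * c.q)) * c.f (c.p * (b * c.p))
      - (c.p * (a * c.q)) * (c.f 1 * (c.p * (b * c.p)))) * (c.p + c.q)) := by
        simp only [c.m1 a, c.m1' a, c.m4 a, c.m4' a, c.m3 hprime a, c.m3' hprime a, c.rv1 b, c.rv1' b, c.rv2 b, c.rv2' b, c.rv3 b, c.rv3' b,
          mul_add, add_mul, mul_sub, sub_mul, mul_neg, neg_mul, mul_assoc,
          mul_zero, zero_mul, mul_one, one_mul, add_zero, zero_add, neg_neg, map_zero,
          c.hp2, c.hq2, c.hpq, c.hqp, c.hp2', c.hq2', c.hpq', c.hqp',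
          c.ra1, c.ra1', c.ra2, c.ra2', c.ra3, c.ra3', c.ra4, c.ra4',
          c.rf1a, c.rf1a', c.rf1b, c.rf1b', c.rf1c, c.rf1c', c.rf1d, c.rf1d']
        noncomm_ring
    _ = c.f (c.p * (a * c.q)) * (c.p * (b * c.p))
      + (c.p * (a * c.q)) * c.f (c.p * (b * c.p))
      - (c.p * (a * c.q)) * (c.f 1 * (c.p * (b * c.p))) := by
        rw [c.hsum, mul_one, one_mul]

set_option maxHeartbeats 1000000 in
lemma case_mm (hprime : ∀ a b : R, (∀ r : R, a * r * b = 0) → a = 0 ∨ b = 0)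
    (hp0 : c.p ≠ 0) (hq0 : c.q ≠ 0) (a b : R) :
    c.f ((c.p * (a * c.q)) * (c.p * (b * c.q)))
      = c.f (c.p * (a * c.q)) * (c.p * (b * c.q))
      + (c.p * (a * c.q)) * c.f (c.p * (b * c.q))
      - (c.p * (a * c.q)) * (c.f 1 * (c.p * (b * c.q))) := by
  calc c.f ((c.p * (a * c.q)) * (c.p * (b * c.q)))
      = (c.p + c.q) * (c.f ((c.p * (a * c.q)) * (c.p * (b * c.q))) * (c.p + c.q)) := by
        rw [c.hsum, mul_one, one_mul]
    _ = (c.p + c.q) * ((c.f (c.p * (a * c.q)) * (c.p * (b * c.q))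
      + (c.p * (a * c.q)) * c.f (c.p * (b * c.q))
      - (c.p * (a * c.q)) * (c.f 1 * (c.p * (b * c.q)))) * (c.p + c.q)) := by
        simp only [c.m1 a, c.m1' a, c.m4 a, c.m4' a, c.m3 hprime a, c.m3' hprime a, c.m1 b, c.m1' b, c.m4 b, c.m4' b, c.m3 hprime b, c.m3' hprime b,
          mul_add, add_mul, mul_sub, sub_mul, mul_neg, neg_mul, mul_assoc,
          mul_zero, zero_mul, mul_one, one_mul, add_zero, zero_add, neg_neg, map_zero,
          c.hp2, c.hq2, c.hpq, c.hqp, c.hp2', c.hq2', c.hpq', c.hqp',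
          c.ra1, c.ra1', c.ra2, c.ra2', c.ra3, c.ra3', c.ra4, c.ra4',
          c.rf1a, c.rf1a', c.rf1b, c.rf1b', c.rf1c, c.rf1c', c.rf1d, c.rf1d']
        noncomm_ring
    _ = c.f (c.p * (a * c.q)) * (c.p * (b * c.q))
      + (c.p * (a * c.q)) * c.f (c.p * (b * c.q))
      - (c.p * (a * c.q)) * (c.f 1 * (c.p * (b * c.q))) := by
        rw [c.hsum, mul_one, one_mul]

set_option maxHeartbeats 1000000 in
lemma case_mn (hprime : ∀ a b : R, (∀ r : R, a * r * b = 0) → a = 0 ∨ b = 0)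
    (hp0 : c.p ≠ 0) (hq0 : c.q ≠ 0) (a b : R) :
    c.f ((c.p * (a * c.q)) * (c.q * (b * c.p)))
      = c.f (c.p * (a * c.q)) * (c.q * (b * c.p))
      + (c.p * (a * c.q)) * c.f (c.q * (b * c.p))
      - (c.p * (a * c.q)) * (c.f 1 * (c.q * (b * c.p))) := by
  have i1 := c.rv1 (a * (c.q * b)); have i1' := c.rv1' (a * (c.q * b))
  have i2 := c.rv2 (a * (c.q * b)); have i2' := c.rv2' (a * (c.q * b))
  have i3 := c.rv3 (a * (c.q * b)); have i3' := c.rv3' (a * (c.q * b))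
  simp only [mul_assoc] at i1 i1' i2 i2' i3 i3'
  have iL := c.L7 hprime hp0 hq0 a b
  calc c.f ((c.p * (a * c.q)) * (c.q * (b * c.p)))
      = (c.p + c.q) * (c.f ((c.p * (a * c.q)) * (c.q * (b * c.p))) * (c.p + c.q)) := by
        rw [c.hsum, mul_one, one_mul]
    _ = (c.p + c.q) * ((c.f (c.p * (a * c.q)) * (c.q * (b * c.p))
      + (c.p * (a * c.q)) * c.f (c.q * (b * c.p))
      - (c.p * (a * c.q)) * (c.f 1 * (c.q * (b * c.p)))) * (c.p + c.q)) := by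
        simp only [i1, i1', i2, i2', i3, i3', iL, c.m1 a, c.m1' a, c.m4 a, c.m4' a, c.m3 hprime a, c.m3' hprime a, c.n1 b, c.n1' b, c.n4 b, c.n4' b, c.n3 hprime b, c.n3' hprime b,
          mul_add, add_mul, mul_sub, sub_mul, mul_neg, neg_mul, mul_assoc,
          mul_zero, zero_mul, mul_one, one_mul, add_zero, zero_add, neg_neg, map_zero,
          c.hp2, c.hq2, c.hpq, c.hqp, c.hp2', c.hq2', c.hpq', c.hqp',
          c.ra1, c.ra1', c.ra2, c.ra2', c.ra3, c.ra3', c.ra4, c.ra4',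
          c.rf1a, c.rf1a', c.rf1b, c.rf1b', c.rf1c, c.rf1c', c.rf1d, c.rf1d']
        linear_combination (norm := noncomm_ring) -(c.mM2 a * (b * c.p))
    _ = c.f (c.p * (a * c.q)) * (c.q * (b * c.p))
      + (c.p * (a * c.q)) * c.f (c.q * (b * c.p))
      - (c.p * (a * c.q)) * (c.f 1 * (c.q * (b * c.p))) := by
        rw [c.hsum, mul_one, one_mul]

set_option maxHeartbeats 1000000 in
lemma case_mw (hprime : ∀ a b : R, (∀ r : R, a * r * b = 0) → a = 0 ∨ b = 0)
    (hp0 : c.p ≠ 0) (hq0 : c.q ≠ 0) (a b : R) :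
    c.f ((c.p * (a * c.q)) * (c.q * (b * c.q)))
      = c.f (c.p * (a * c.q)) * (c.q * (b * c.q))
      + (c.p * (a * c.q)) * c.f (c.q * (b * c.q))
      - (c.p * (a * c.q)) * (c.f 1 * (c.q * (b * c.q))) := by
  have i1 := c.m1 (a * (c.q * b)); have i1' := c.m1' (a * (c.q * b))
  have i4 := c.m4 (a * (c.q * b)); have i4' := c.m4' (a * (c.q * b))
  have i3 := c.m3 hprime (a * (c.q * b)); have i3' := c.m3' hprime (a * (c.q * b))
  simp only [mul_assoc] at i1 i1' i4 i4' i3 i3'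
  have iL := c.L4 a b
  calc c.f ((c.p * (a * c.q)) * (c.q * (b * c.q)))
      = (c.p + c.q) * (c.f ((c.p * (a * c.q)) * (c.q * (b * c.q))) * (c.p + c.q)) := by
        rw [c.hsum, mul_one, one_mul]
    _ = (c.p + c.q) * ((c.f (c.p * (a * c.q)) * (c.q * (b * c.q))
      + (c.p * (a * c.q)) * c.f (c.q * (b * c.q))
      - (c.p * (a * c.q)) * (c.f 1 * (c.q * (b * c.q)))) * (c.p + c.q)) := by
        simp only [i1, i1', i4, i4', i3, i3', iL, c.m1 a, c.m1' a, c.m4 a, c.m4' a, c.m3 hprime a, c.m3' hprime a, c.rb1 b, c.rb1' b, c.rb2 b, c.rb2' b, c.rb3 b, c.rb3' b,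
          mul_add, add_mul, mul_sub, sub_mul, mul_neg, neg_mul, mul_assoc,
          mul_zero, zero_mul, mul_one, one_mul, add_zero, zero_add, neg_neg, map_zero,
          c.hp2, c.hq2, c.hpq, c.hqp, c.hp2', c.hq2', c.hpq', c.hqp',
          c.ra1, c.ra1', c.ra2, c.ra2', c.ra3, c.ra3', c.ra4, c.ra4',
          c.rf1a, c.rf1a', c.rf1b, c.rf1b', c.rf1c, c.rf1c', c.rf1d, c.rf1d']
        linear_combination (norm := noncomm_ring) -(c.mM2 a * (b * c.q))
    _ = c.f (c.p * (a * c.q)) * (c.q * (b * c.q))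
      + (c.p * (a * c.q)) * c.f (c.q * (b * c.q))
      - (c.p * (a * c.q)) * (c.f 1 * (c.q * (b * c.q))) := by
        rw [c.hsum, mul_one, one_mul]

set_option maxHeartbeats 2000000 in
lemma master (hprime : ∀ a b : R, (∀ r : R, a * r * b = 0) → a = 0 ∨ b = 0)
    (hp0 : c.p ≠ 0) (hq0 : c.q ≠ 0) (u v : R) :
    c.f (u * v) = c.f u * v + u * c.f v - u * (c.f 1 * v) := by
  have hq0' : c.mirror.q ≠ 0 := hp0
  have hp0' : c.mirror.p ≠ 0 := hq0
  have c11 := c.case_vv hprime hp0 hq0 u v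
  have c12 := c.case_vm hprime hp0 hq0 u v
  have c13 := c.case_vn hprime hp0 hq0 u v
  have c14 := c.case_vw hprime hp0 hq0 u v
  have c21 := c.case_mv hprime hp0 hq0 u v
  have c22 := c.case_mm hprime hp0 hq0 u v
  have c23 := c.case_mn hprime hp0 hq0 u v
  have c24 := c.case_mw hprime hp0 hq0 u v
  have c31 := c.mirror.case_mw hprime hp0' hq0' u v
  have c32 := c.mirror.case_mn hprime hp0' hq0' u v
  have c33 := c.mirror.case_mm hprime hp0' hq0' u v
  have c34 := c.mirror.case_mv hprime hp0' hq0' u v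
  have c41 := c.mirror.case_vw hprime hp0' hq0' u v
  have c42 := c.mirror.case_vn hprime hp0' hq0' u v
  have c43 := c.mirror.case_vm hprime hp0' hq0' u v
  have c44 := c.mirror.case_vv hprime hp0' hq0' u v
  simp only [mirror_f, mirror_p, mirror_q] at c31 c32 c33 c34 c41 c42 c43 c44
  have hu := c.decEl' u
  have hv := c.decEl' v
  rw [hu, hv]
  have hprod : (c.p * (u * c.p) + c.p * (u * c.q) + c.q * (u * c.p) + c.q * (u * c.q))
      * (c.p * (v * c.p) + c.p * (v * c.q) + c.q * (v * c.p) + c.q * (v * c.q))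
    = (c.p * (u * c.p)) * (c.p * (v * c.p)) + (c.p * (u * c.p)) * (c.p * (v * c.q))
    + (c.p * (u * c.p)) * (c.q * (v * c.p)) + (c.p * (u * c.p)) * (c.q * (v * c.q))
    + (c.p * (u * c.q)) * (c.p * (v * c.p)) + (c.p * (u * c.q)) * (c.p * (v * c.q))
    + (c.p * (u * c.q)) * (c.q * (v * c.p)) + (c.p * (u * c.q)) * (c.q * (v * c.q))
    + (c.q * (u * c.p)) * (c.p * (v * c.p)) + (c.q * (u * c.p)) * (c.p * (v * c.q))
    + (c.q * (u * c.p)) * (c.q * (v * c.p)) + (c.q * (u * c.p)) * (c.q * (v * c.q))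
    + (c.q * (u * c.q)) * (c.p * (v * c.p)) + (c.q * (u * c.q)) * (c.p * (v * c.q))
    + (c.q * (u * c.q)) * (c.q * (v * c.p)) + (c.q * (u * c.q)) * (c.q * (v * c.q)) := by
    noncomm_ring
  rw [hprod]
  simp only [map_add]
  rw [c11, c12, c13, c14, c21, c22, c23, c24, c31, c32, c33, c34, c41, c42, c43, c44]
  noncomm_ring

end Ctx
end PrimeRingCor

theorem prime_ring_decomposition
    {R : Type*} [Ring R]
    (h2 : ∀ a : R, a + a = 0 → a = 0)
    (hprime : ∀ a b : R, (∀ r : R, a * r * b = 0) → a = 0 ∨ b = 0)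
    (P : R) (hP2 : P * P = P) (hP0 : P ≠ 0) (hP1 : P ≠ 1)
    (φ : R →+ R)
    (hcondP : ∀ U V : R, U * V = 0 → V * U = 0 →
      φ U * V + V * φ U + U * φ V + φ V * U = 0) :
    (∃ δ η : R →+ R,
      (∀ a b : R, δ (a * b) = δ a * b + a * δ b) ∧
      (∀ a : R, η a = η 1 * a ∧ η a = a * η 1) ∧
      (∀ a : R, φ a = δ a + η a)) ∧
    (φ 1 = 0 → ∀ a b : R, φ (a * b) = φ a * b + a * φ b) := by
  have hq0 : (1 : R) - P ≠ 0 := by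
    intro h
    exact hP1 ((sub_eq_zero.mp h).symm)
  have hsum : P + (1 - P) = 1 := by abel
  have hpq : P * (1 - P) = 0 := by rw [mul_sub, mul_one, hP2, sub_self]
  let c : PrimeRingCor.Ctx R :=
    { f := φ, p := P, q := 1 - P, hsum := hsum, hpq := hpq, h2 := h2, hB := hcondP }
  have hmaster := c.master hprime hP0 hq0
  have hcent := c.cent1 hprime hP0 hq0
  constructor
  · refine ⟨φ - AddMonoidHom.mulRight (φ 1), AddMonoidHom.mulRight (φ 1), ?_, ?_, ?_⟩
    · intro a b
      simp only [AddMonoidHom.sub_apply, AddMonoidHom.mulRight_apply]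
      linear_combination (norm := noncomm_ring) hmaster a b
    · intro a
      constructor
      · simp only [AddMonoidHom.mulRight_apply, one_mul]
        exact (hcent a).symm
      · simp only [AddMonoidHom.mulRight_apply, one_mul]
    · intro a
      simp only [AddMonoidHom.sub_apply, AddMonoidHom.mulRight_apply]
      abel
  · intro h1 a b
    have := hmaster a b
    rw [h1] at this
    simpa using this
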